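/- For j ∈ ℕ ∪ {∞}, let u_j, v_j : [0,2π] → ℝ be continuous functions with Var(v_j;[0,2π]) < ∞, and let μ_j be the unique finite signed Borel measure on (0,2π] satisfying μ_j((a,b]) = v_j(b) − v_j(a) for all 0 ≤ a ≤ b ≤ 2π. Assume that ∫₀^{2π} |u_j − u_∞| dt → 0, Var(u_j − u_∞; [0,2π]) → 0, ∫₀^{2π} |v_j − v_∞| dt → 0 and Var(v_j − v_∞; [0,2π]) → 0 as j → ∞. Then ∫_{(0,2π]} u_j dμ_j → ∫_{(0,2π]} u_∞ dμ_∞. -/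

import Mathlib

open MeasureTheory Set Filter Topology

/-- Integral of a function against a finite signed measure, via the Jordan decomposition. -/
noncomputable def sInt {X : Type*} [MeasurableSpace X] (μ : SignedMeasure X) (f : X → ℝ) : ℝ :=
  (∫ x, f x ∂μ.toJordanDecomposition.posPart) - ∫ x, f x ∂μ.toJordanDecomposition.negPart

namespace Stmt13Aux


lemma evar_add_le (f g : ℝ → ℝ) (s : Set ℝ) :
    eVariationOn (fun x => f x + g x) s ≤ eVariationOn f s + eVariationOn g s := by
  apply iSup_le
  rintro ⟨n, ⟨w, hw, ws⟩⟩
  calc ∑ i ∈ Finset.range n, edist (f (w (i+1)) + g (w (i+1))) (f (w i) + g (w i))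
      ≤ ∑ i ∈ Finset.range n,
        (edist (f (w (i+1))) (f (w i)) + edist (g (w (i+1))) (g (w i))) :=
        Finset.sum_le_sum (fun i _ => edist_add_add_le _ _ _ _)
    _ = (∑ i ∈ Finset.range n, edist (f (w (i+1))) (f (w i)))
        + ∑ i ∈ Finset.range n, edist (g (w (i+1))) (g (w i)) := Finset.sum_add_distrib
    _ ≤ _ := add_le_add (eVariationOn.sum_le (f := f) (n := n) hw ws) (eVariationOn.sum_le (f := g) (n := n) hw ws)

lemma part_null {s : SignedMeasure ℝ} {A : Set ℝ} (hA : s.totalVariation A = 0) :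
    s.toJordanDecomposition.posPart A = 0 ∧ s.toJordanDecomposition.negPart A = 0 := by
  rwa [SignedMeasure.totalVariation, Measure.add_apply, add_eq_zero] at hA

lemma apply_eq (s : SignedMeasure ℝ) {A : Set ℝ} (hA : MeasurableSet A) :
    s A = (s.toJordanDecomposition.posPart A).toReal
      - (s.toJordanDecomposition.negPart A).toReal := by
  conv_lhs => rw [← s.toSignedMeasure_toJordanDecomposition]
  rw [JordanDecomposition.toSignedMeasure, VectorMeasure.sub_apply,
    Measure.toSignedMeasure_apply_measurable hA, Measure.toSignedMeasure_apply_measurable hA,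
    measureReal_def, measureReal_def]

lemma integrable_part {ρ : Measure ℝ} [IsFiniteMeasure ρ] {B : ℝ}
    (hρ : ρ (Ioc 0 B)ᶜ = 0) {f : ℝ → ℝ} (hf : ContinuousOn f (Icc 0 B)) :
    Integrable f ρ := by
  have hae : ∀ᵐ x ∂ρ, x ∈ Ioc 0 B := by
    rw [← compl_mem_ae_iff] at hρ
    filter_upwards [hρ] with x hx using by simpa using hx
  have hres : ρ.restrict (Ioc 0 B) = ρ := Measure.restrict_eq_self_of_ae_mem hae
  obtain ⟨C, hC⟩ := isCompact_Icc.exists_bound_of_continuousOn hf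
  refine ⟨?_, ?_⟩
  · have := (hf.mono Ioc_subset_Icc_self).aestronglyMeasurable (μ := ρ) measurableSet_Ioc
    rwa [hres] at this
  · apply HasFiniteIntegral.of_bounded (C := C)
    filter_upwards [hae] with x hx using hC x (Ioc_subset_Icc_self hx)

lemma sInt_abs_le {s : SignedMeasure ℝ} {f : ℝ → ℝ} {C : ℝ} {B : ℝ}
    (hsupp : s.totalVariation (Ioc 0 B)ᶜ = 0) (hC : ∀ x ∈ Ioc 0 B, |f x| ≤ C) :
    |sInt s f| ≤ C * ((s.toJordanDecomposition.posPart univ).toReal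
      + (s.toJordanDecomposition.negPart univ).toReal) := by
  obtain ⟨h1, h2⟩ := part_null hsupp
  have hae1 : ∀ᵐ x ∂s.toJordanDecomposition.posPart, ‖f x‖ ≤ C := by
    rw [← compl_mem_ae_iff] at h1
    filter_upwards [h1] with x hx using by simpa using hC x (by simpa using hx)
  have hae2 : ∀ᵐ x ∂s.toJordanDecomposition.negPart, ‖f x‖ ≤ C := by
    rw [← compl_mem_ae_iff] at h2
    filter_upwards [h2] with x hx using by simpa using hC x (by simpa using hx)
  have b1 := norm_integral_le_of_norm_le_const hae1
  have b2 := norm_integral_le_of_norm_le_const hae2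
  rw [sInt]
  calc |(∫ x, f x ∂s.toJordanDecomposition.posPart) - ∫ x, f x ∂s.toJordanDecomposition.negPart|
      ≤ ‖∫ x, f x ∂s.toJordanDecomposition.posPart‖
        + ‖∫ x, f x ∂s.toJordanDecomposition.negPart‖ := abs_sub _ _
    _ ≤ _ := by rw [mul_add]; exact add_le_add b1 b2



lemma abs_le_of_L1_var {B : ℝ} (hB : 0 < B) {h : ℝ → ℝ} (hc : ContinuousOn h (Icc 0 B))
    (hfin : eVariationOn h (Icc 0 B) ≠ ⊤) {x : ℝ} (hx : x ∈ Icc 0 B) :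
    |h x| ≤ (∫ t in Icc 0 B, |h t|) / B + (eVariationOn h (Icc 0 B)).toReal := by
  set V := (eVariationOn h (Icc 0 B)).toReal
  have key : ∀ y ∈ Icc 0 B, |h x| - V ≤ |h y| := by
    intro y hy
    have h1 : |h x - h y| ≤ V := by
      have := eVariationOn.edist_le h hx hy
      have h2 : edist (h x) (h y) ≠ ⊤ := ne_top_of_le_ne_top hfin this
      have := ENNReal.toReal_mono hfin this
      rwa [edist_dist, ENNReal.toReal_ofReal dist_nonneg, Real.dist_eq] at this
    have := abs_sub_abs_le_abs_sub (h x) (h y)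
    linarith
  have hint : IntegrableOn (fun t => |h t|) (Icc 0 B) := hc.abs.integrableOn_Icc
  have hint2 : IntegrableOn (fun _ : ℝ => |h x| - V) (Icc 0 B) := integrableOn_const (by
    simp [Real.volume_Icc])
  have hmono := setIntegral_mono_on hint2 hint measurableSet_Icc key
  rw [setIntegral_const] at hmono
  have hvol : (volume (Icc (0:ℝ) B)).toReal = B := by
    rw [Real.volume_Icc]; simp [ENNReal.toReal_ofReal hB.le]
  rw [measureReal_def, hvol, smul_eq_mul] at hmono
  have hmono' : (|h x| - V) * B ≤ ∫ t in Icc 0 B, |h t| := by linarith [hmono]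
  rw [div_add' _ _ _ hB.ne', le_div_iff₀ hB]
  nlinarith

lemma measure_identity (s t : SignedMeasure ℝ) :
    s.toJordanDecomposition.posPart + (t.toJordanDecomposition.negPart
        + (s - t).toJordanDecomposition.negPart)
      = s.toJordanDecomposition.negPart + (t.toJordanDecomposition.posPart
        + (s - t).toJordanDecomposition.posPart) := by
  ext A hA
  simp only [Measure.add_apply]
  have e1 := apply_eq s hA
  have e2 := apply_eq t hA
  have e3 := apply_eq (s - t) hA
  rw [VectorMeasure.sub_apply] at e3
  have f1 : s.toJordanDecomposition.posPart A ≠ ⊤ := measure_ne_top _ _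
  have f2 : s.toJordanDecomposition.negPart A ≠ ⊤ := measure_ne_top _ _
  have f3 : t.toJordanDecomposition.posPart A ≠ ⊤ := measure_ne_top _ _
  have f4 : t.toJordanDecomposition.negPart A ≠ ⊤ := measure_ne_top _ _
  have f5 : (s - t).toJordanDecomposition.posPart A ≠ ⊤ := measure_ne_top _ _
  have f6 : (s - t).toJordanDecomposition.negPart A ≠ ⊤ := measure_ne_top _ _
  rw [← ENNReal.toReal_eq_toReal_iff' (by finiteness) (by finiteness),
    ENNReal.toReal_add f1 (by finiteness), ENNReal.toReal_add f4 f6,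
    ENNReal.toReal_add f2 (by finiteness), ENNReal.toReal_add f3 f5]
  linarith

lemma sInt_sub_meas (s t : SignedMeasure ℝ) {g : ℝ → ℝ}
    (h1 : Integrable g s.toJordanDecomposition.posPart)
    (h2 : Integrable g s.toJordanDecomposition.negPart)
    (h3 : Integrable g t.toJordanDecomposition.posPart)
    (h4 : Integrable g t.toJordanDecomposition.negPart)
    (h5 : Integrable g (s - t).toJordanDecomposition.posPart)
    (h6 : Integrable g (s - t).toJordanDecomposition.negPart) :
    sInt s g = sInt t g + sInt (s - t) g := by
  have key := measure_identity s t
  have hL : ∫ x, g x ∂(s.toJordanDecomposition.posPart + (t.toJordanDecomposition.negPart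
      + (s - t).toJordanDecomposition.negPart)) = (∫ x, g x ∂s.toJordanDecomposition.posPart)
      + ((∫ x, g x ∂t.toJordanDecomposition.negPart)
      + ∫ x, g x ∂(s - t).toJordanDecomposition.negPart) := by
    rw [integral_add_measure h1 (h4.add_measure h6), integral_add_measure h4 h6]
  have hR : ∫ x, g x ∂(s.toJordanDecomposition.negPart + (t.toJordanDecomposition.posPart
      + (s - t).toJordanDecomposition.posPart)) = (∫ x, g x ∂s.toJordanDecomposition.negPart)
      + ((∫ x, g x ∂t.toJordanDecomposition.posPart)
      + ∫ x, g x ∂(s - t).toJordanDecomposition.posPart) := by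
    rw [integral_add_measure h2 (h3.add_measure h5), integral_add_measure h3 h5]
  rw [key] at hL
  rw [hL] at hR
  simp only [sInt]
  linarith

lemma sInt_fun_sub (s : SignedMeasure ℝ) {f g : ℝ → ℝ}
    (h1 : Integrable f s.toJordanDecomposition.posPart)
    (h2 : Integrable f s.toJordanDecomposition.negPart)
    (h3 : Integrable g s.toJordanDecomposition.posPart)
    (h4 : Integrable g s.toJordanDecomposition.negPart) :
    sInt s (fun x => f x - g x) = sInt s f - sInt s g := by
  simp only [sInt, integral_sub h1 h3, integral_sub h2 h4]
  ring

lemma totalVariation_compl_sub {s t : SignedMeasure ℝ} {A : Set ℝ} (hA : MeasurableSet A)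
    (hs : s.totalVariation Aᶜ = 0) (ht : t.totalVariation Aᶜ = 0) :
    (s - t).totalVariation Aᶜ = 0 := by
  obtain ⟨i, hi₁, hi₂, hi₃, hpos, hneg⟩ := (s - t).toJordanDecomposition_spec
  have hz : ∀ C : Set ℝ, C ⊆ Aᶜ → (s - t) C = 0 := by
    intro C hC
    rw [VectorMeasure.sub_apply,
      s.null_of_totalVariation_zero (measure_mono_null hC hs),
      t.null_of_totalVariation_zero (measure_mono_null hC ht), sub_zero]
  rw [SignedMeasure.totalVariation, Measure.add_apply, hpos, hneg,
    SignedMeasure.toMeasureOfZeroLE_apply _ hi₂ hi₁ hA.compl,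
    SignedMeasure.toMeasureOfLEZero_apply _ hi₃ hi₁.compl hA.compl]
  have z1 : (s - t) (i ∩ Aᶜ) = 0 := hz _ inter_subset_right
  have z2 : (s - t) (iᶜ ∩ Aᶜ) = 0 := hz _ inter_subset_right
  simp [z1, z2]



lemma totalVar_bound {B : ℝ} (hB : 0 < B) {w : ℝ → ℝ}
    (hw : ContinuousOn w (Icc 0 B)) (hwBV : eVariationOn w (Icc 0 B) ≠ ⊤)
    {s : SignedMeasure ℝ} (hsupp : s.totalVariation (Ioc 0 B)ᶜ = 0)
    (hs : ∀ a b : ℝ, 0 ≤ a → a ≤ b → b ≤ B → s (Ioc a b) = w b - w a) :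
    (s.toJordanDecomposition.posPart univ).toReal
      + (s.toJordanDecomposition.negPart univ).toReal
      ≤ 3 * (eVariationOn w (Icc 0 B)).toReal := by
  have hS0 : (0:ℝ) ∈ Icc 0 B := ⟨le_refl 0, hB.le⟩
  have hSB : B ∈ Icc (0:ℝ) B := ⟨hB.le, le_refl B⟩
  have hlbv : LocallyBoundedVariationOn w (Icc 0 B) := fun a b _ _ =>
    ne_top_of_le_ne_top hwBV (eVariationOn.mono w inter_subset_left)
  set proj : ℝ → ℝ := fun x => max (min x B) 0 with hproj
  have hprojmem : ∀ x, proj x ∈ Icc 0 B := fun x =>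
    ⟨le_max_right _ _, max_le (min_le_right _ _) hB.le⟩
  have hprojmono : Monotone proj := fun x y hxy =>
    max_le_max (min_le_min_right _ hxy) (le_refl 0)
  have hproj_eq : ∀ x ∈ Icc 0 B, proj x = x := fun x hx => by
    rw [hproj]; simp only []; rw [min_eq_left hx.2, max_eq_left hx.1]
  set p : ℝ → ℝ := fun x => variationOnFromTo w (Icc 0 B) 0 (proj x) with hpdef
  have hp : Monotone p := fun x y hxy =>
    variationOnFromTo.monotoneOn hlbv hS0 (hprojmem x) (hprojmem y) (hprojmono hxy)
  set q : ℝ → ℝ := fun x => p x - w (proj x) with hqdef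
  have hq : Monotone q := fun x y hxy =>
    variationOnFromTo.sub_self_monotoneOn hlbv hS0 (hprojmem x) (hprojmem y) (hprojmono hxy)
  have hcont : Continuous (fun x => w (proj x)) :=
    hw.comp_continuous ((continuous_id.min continuous_const).max continuous_const) hprojmem
  have key : ∀ x, Function.rightLim p x - Function.rightLim q x = w (proj x) := by
    intro x
    have h3 : Tendsto (fun y => p y - q y) (𝓝[>] x)
        (𝓝 (Function.rightLim p x - Function.rightLim q x)) :=
      (hp.tendsto_rightLim x).sub (hq.tendsto_rightLim x)
    have h4 : (fun y => p y - q y) = fun y => w (proj y) := by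
      funext y; simp [hqdef]
    have h5 : Tendsto (fun y => w (proj y)) (𝓝[>] x) (𝓝 (w (proj x))) :=
      (hcont.tendsto x).mono_left nhdsWithin_le_nhds
    rw [h4] at h3
    exact tendsto_nhds_unique h3 h5
  -- value of s on arbitrary Ioc
  have svals : ∀ a b : ℝ, a < b → s (Ioc a b) = w (proj b) - w (proj a) := by
    intro a b hab
    have hdec : s (Ioc a b) = s (Ioc a b ∩ Ioc 0 B) + s (Ioc a b \ Ioc 0 B) := by
      conv_lhs => rw [← inter_union_diff (Ioc a b) (Ioc 0 B)]
      exact s.of_union (disjoint_sdiff_self_right.mono_left inter_subset_right)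
        (measurableSet_Ioc.inter measurableSet_Ioc) (measurableSet_Ioc.diff measurableSet_Ioc)
    have hz : s (Ioc a b \ Ioc 0 B) = 0 :=
      s.null_of_totalVariation_zero (measure_mono_null (diff_subset_compl _ _) hsupp)
    rw [hdec, hz, add_zero, Set.Ioc_inter_Ioc]
    rcases le_or_gt (a ⊔ 0) (b ⊓ B) with h | h
    · rw [hs (a ⊔ 0) (b ⊓ B) le_sup_right h inf_le_right]
      have hpb : proj b = b ⊓ B := by
        rw [hproj]; simp only []
        rw [max_eq_left (le_trans le_sup_right h)]
      have hpa : proj a = a ⊔ 0 := by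
        have haB : a ≤ B := le_trans (le_trans le_sup_left h) inf_le_right
        rw [hproj]; simp only [min_eq_left haB]
      rw [hpb, hpa]
    · have he : Ioc (a ⊔ 0) (b ⊓ B) = ∅ := Ioc_eq_empty (not_lt.2 h.le)
      have hpp : proj a = proj b := by
        apply le_antisymm (hprojmono hab.le)
        rcases le_or_gt (b ⊓ B) 0 with h0 | h0
        · rw [hproj]; simp only []
          exact max_le (le_trans h0 (le_max_right _ _)) (le_max_right _ _)
        · have ha0 : a ⊔ 0 = a := sup_eq_left.2 (by
            by_contra hcon
            push_neg at hcon
            have : a ⊔ 0 = 0 := sup_eq_right.2 (le_of_lt hcon)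
            rw [this] at h; exact absurd h (not_lt.2 h0.le))
          rw [ha0] at h
          rw [hproj]; simp only []
          exact max_le_max (le_min (le_of_lt h) (min_le_right _ _)) (le_refl 0)
      rw [he, hpp]
      simp
  -- Stieltjes functions
  set P := hp.stieltjesFunction with hPdef
  set Q := hq.stieltjesFunction with hQdef
  have hPx : ∀ x, P x = Function.rightLim p x := fun x => hp.stieltjesFunction_eq x
  have hQx : ∀ x, Q x = Function.rightLim q x := fun x => hq.stieltjesFunction_eq x
  -- measure equality
  have meq : s.toJordanDecomposition.posPart + Q.measure
      = s.toJordanDecomposition.negPart + P.measure := by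
    refine Measure.ext_of_Ioc' _ _ (fun a b hab => ?_) (fun a b hab => ?_)
    · rw [Measure.add_apply, StieltjesFunction.measure_Ioc]
      exact ENNReal.add_ne_top.2 ⟨measure_ne_top _ _, ENNReal.ofReal_ne_top⟩
    · simp only [Measure.add_apply]
      rw [StieltjesFunction.measure_Ioc, StieltjesFunction.measure_Ioc]
      have hPm : P a ≤ P b := P.mono hab.le
      have hQm : Q a ≤ Q b := Q.mono hab.le
      rw [← ENNReal.toReal_eq_toReal_iff' (by finiteness) (by finiteness),
        ENNReal.toReal_add (measure_ne_top _ _) ENNReal.ofReal_ne_top,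
        ENNReal.toReal_add (measure_ne_top _ _) ENNReal.ofReal_ne_top,
        ENNReal.toReal_ofReal (by linarith), ENNReal.toReal_ofReal (by linarith)]
      have e := apply_eq s (measurableSet_Ioc (a := a) (b := b))
      have hv := svals a b hab
      have k1 := key a
      have k2 := key b
      rw [hPx a, hPx b] at *
      rw [hQx a, hQx b] at *
      linarith
  -- limits / constancy
  set V' := variationOnFromTo w (Icc 0 B) 0 B with hV'def
  have hp0 : ∀ x : ℝ, x ≤ 0 → p x = 0 := by
    intro x hx
    have hpx : proj x = 0 := max_eq_right (le_trans (min_le_left _ _) hx)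
    rw [hpdef]; simp only []; rw [hpx]
    exact variationOnFromTo.self w _ 0
  have hpB : ∀ x : ℝ, B ≤ x → p x = V' := by
    intro x hx
    have hpx : proj x = B := by
      rw [hproj]; simp only []; rw [min_eq_right hx, max_eq_left hB.le]
    rw [hpdef]; simp only []; rw [hpx]
  have hq0 : ∀ x : ℝ, x ≤ 0 → q x = -(w 0) := by
    intro x hx
    have hpx : proj x = 0 := max_eq_right (le_trans (min_le_left _ _) hx)
    rw [hqdef]; simp only []; rw [hp0 x hx, hpx, zero_sub]
  have hqB : ∀ x : ℝ, B ≤ x → q x = V' - w B := by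
    intro x hx
    have hpx : proj x = B := by
      rw [hproj]; simp only []; rw [min_eq_right hx, max_eq_left hB.le]
    rw [hqdef]; simp only []; rw [hpB x hx, hpx]
  have hPconst : ∀ x : ℝ, x < 0 → P x = 0 := by
    intro x hx
    rw [hPx]
    refine rightLim_eq_of_tendsto ?_
    refine tendsto_const_nhds.congr' ?_
    exact Filter.eventuallyEq_of_mem (Ioo_mem_nhdsGT_of_mem ⟨le_refl x, hx⟩)
      (fun y hy => (hp0 y hy.2.le).symm)
  have hPconstT : ∀ x : ℝ, B < x → P x = V' := by
    intro x hx
    rw [hPx]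
    refine rightLim_eq_of_tendsto ?_
    refine tendsto_const_nhds.congr' ?_
    exact Filter.eventuallyEq_of_mem self_mem_nhdsWithin
      (fun y hy => (hpB y (le_of_lt (hx.trans hy))).symm)
  have hQconst : ∀ x : ℝ, x < 0 → Q x = -(w 0) := by
    intro x hx
    rw [hQx]
    refine rightLim_eq_of_tendsto ?_
    refine tendsto_const_nhds.congr' ?_
    exact Filter.eventuallyEq_of_mem (Ioo_mem_nhdsGT_of_mem ⟨le_refl x, hx⟩)
      (fun y hy => (hq0 y hy.2.le).symm)
  have hQconstT : ∀ x : ℝ, B < x → Q x = V' - w B := by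
    intro x hx
    rw [hQx]
    refine rightLim_eq_of_tendsto ?_
    refine tendsto_const_nhds.congr' ?_
    exact Filter.eventuallyEq_of_mem self_mem_nhdsWithin
      (fun y hy => (hqB y (le_of_lt (hx.trans hy))).symm)
  have hPbot : Tendsto (↑P : ℝ → ℝ) atBot (𝓝 0) :=
    tendsto_const_nhds.congr' ((eventually_lt_atBot (0:ℝ)).mono fun x hx => (hPconst x hx).symm)
  have hPtop : Tendsto (↑P : ℝ → ℝ) atTop (𝓝 V') :=
    tendsto_const_nhds.congr' ((eventually_gt_atTop B).mono fun x hx => (hPconstT x hx).symm)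
  have hQbot : Tendsto (↑Q : ℝ → ℝ) atBot (𝓝 (-(w 0))) :=
    tendsto_const_nhds.congr' ((eventually_lt_atBot (0:ℝ)).mono fun x hx => (hQconst x hx).symm)
  have hQtop : Tendsto (↑Q : ℝ → ℝ) atTop (𝓝 (V' - w B)) :=
    tendsto_const_nhds.congr' ((eventually_gt_atTop B).mono fun x hx => (hQconstT x hx).symm)
  have hPuniv : P.measure univ = ENNReal.ofReal V' := by
    rw [P.measure_univ hPbot hPtop, sub_zero]
  have hQuniv : Q.measure univ = ENNReal.ofReal (V' - w B + w 0) := by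
    rw [Q.measure_univ hQbot hQtop, sub_neg_eq_add]
  -- mutual singularity bounds
  obtain ⟨T, hTm, hT1, hT2⟩ := s.toJordanDecomposition.mutuallySingular
  have hposU : s.toJordanDecomposition.posPart univ ≤ ENNReal.ofReal V' := by
    have h0 : s.toJordanDecomposition.posPart Tᶜ = s.toJordanDecomposition.posPart univ :=
      measure_of_measure_compl_eq_zero (by rwa [compl_compl])
    have hmeq := congrArg (fun m : Measure ℝ => m Tᶜ) meq
    simp only [Measure.add_apply] at hmeq
    rw [hT2, zero_add] at hmeq
    calc s.toJordanDecomposition.posPart univ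
        = s.toJordanDecomposition.posPart Tᶜ := h0.symm
      _ ≤ s.toJordanDecomposition.posPart Tᶜ + Q.measure Tᶜ := le_self_add
      _ = P.measure Tᶜ := hmeq
      _ ≤ P.measure univ := measure_mono (subset_univ _)
      _ = ENNReal.ofReal V' := hPuniv
  have hnegU : s.toJordanDecomposition.negPart univ ≤ ENNReal.ofReal (V' - w B + w 0) := by
    have h0 : s.toJordanDecomposition.negPart T = s.toJordanDecomposition.negPart univ :=
      measure_of_measure_compl_eq_zero hT2
    have hmeq := congrArg (fun m : Measure ℝ => m T) meq
    simp only [Measure.add_apply] at hmeq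
    rw [hT1, zero_add] at hmeq
    calc s.toJordanDecomposition.negPart univ
        = s.toJordanDecomposition.negPart T := h0.symm
      _ ≤ s.toJordanDecomposition.negPart T + P.measure T := le_self_add
      _ = Q.measure T := hmeq.symm
      _ ≤ Q.measure univ := measure_mono (subset_univ _)
      _ = ENNReal.ofReal (V' - w B + w 0) := hQuniv
  -- wrap up
  have hV'nonneg : 0 ≤ V' := variationOnFromTo.nonneg_of_le w _ hB.le
  have hQnonneg : 0 ≤ V' - w B + w 0 := by
    have h1 : q 0 ≤ q B := hq hB.le
    rw [hq0 0 le_rfl, hqB B le_rfl] at h1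
    linarith
  have hV'eq : V' = (eVariationOn w (Icc 0 B)).toReal := by
    rw [hV'def, variationOnFromTo.eq_of_le w _ hB.le, Set.inter_self]
  have habs : |w B - w 0| ≤ V' := by
    have h1 := eVariationOn.edist_le w hSB hS0
    have h2 := ENNReal.toReal_mono hwBV h1
    rw [edist_dist, ENNReal.toReal_ofReal dist_nonneg, Real.dist_eq] at h2
    rw [hV'eq]; exact h2
  have t1 : (s.toJordanDecomposition.posPart univ).toReal ≤ V' := by
    have := ENNReal.toReal_mono ENNReal.ofReal_ne_top hposU
    rwa [ENNReal.toReal_ofReal hV'nonneg] at this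
  have t2 : (s.toJordanDecomposition.negPart univ).toReal ≤ V' - w B + w 0 := by
    have := ENNReal.toReal_mono ENNReal.ofReal_ne_top hnegU
    rwa [ENNReal.toReal_ofReal hQnonneg] at this
  have habs' := abs_le.1 habs
  rw [← hV'eq]
  linarith


end Stmt13Aux

/-- Let `u_j, v_j : [0,2π] → ℝ` (`j ∈ ℕ ∪ {∞}`) be continuous with
`v_j` of bounded variation, and let `μ_j` be the Stieltjes measures of `v_j` on `(0,2π]`.
If `u_j → u_∞` and `v_j → v_∞` in `L¹` and in variation, then
`∫_{(0,2π]} u_j dμ_j → ∫_{(0,2π]} u_∞ dμ_∞`. -/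
theorem stmt13 (u v : ℕ → ℝ → ℝ) (uinf vinf : ℝ → ℝ)
    (hu : ∀ j, ContinuousOn (u j) (Set.Icc 0 (2 * Real.pi)))
    (hv : ∀ j, ContinuousOn (v j) (Set.Icc 0 (2 * Real.pi)))
    (huinf : ContinuousOn uinf (Set.Icc 0 (2 * Real.pi)))
    (hvinf : ContinuousOn vinf (Set.Icc 0 (2 * Real.pi)))
    (hvBV : ∀ j, eVariationOn (v j) (Set.Icc 0 (2 * Real.pi)) < ⊤)
    (hvinfBV : eVariationOn vinf (Set.Icc 0 (2 * Real.pi)) < ⊤)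
    (μ : ℕ → SignedMeasure ℝ) (μinf : SignedMeasure ℝ)
    (hμsupp : ∀ j, (μ j).totalVariation (Set.Ioc 0 (2 * Real.pi))ᶜ = 0)
    (hμinfsupp : μinf.totalVariation (Set.Ioc 0 (2 * Real.pi))ᶜ = 0)
    (hμ : ∀ j, ∀ a b : ℝ, 0 ≤ a → a ≤ b → b ≤ 2 * Real.pi →
      μ j (Set.Ioc a b) = v j b - v j a)
    (hμinf : ∀ a b : ℝ, 0 ≤ a → a ≤ b → b ≤ 2 * Real.pi →
      μinf (Set.Ioc a b) = vinf b - vinf a)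
    (huL1 : Tendsto (fun j => ∫ t in Set.Icc 0 (2 * Real.pi), |u j t - uinf t|)
      atTop (𝓝 0))
    (huVar : Tendsto (fun j => eVariationOn (fun t => u j t - uinf t)
      (Set.Icc 0 (2 * Real.pi))) atTop (𝓝 0))
    (hvL1 : Tendsto (fun j => ∫ t in Set.Icc 0 (2 * Real.pi), |v j t - vinf t|)
      atTop (𝓝 0))
    (hvVar : Tendsto (fun j => eVariationOn (fun t => v j t - vinf t)
      (Set.Icc 0 (2 * Real.pi))) atTop (𝓝 0)) :
    Tendsto (fun j => sInt (μ j) (u j)) atTop (𝓝 (sInt μinf uinf)) := by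
  classical
  set B : ℝ := 2 * Real.pi with hBdef
  have hB : (0:ℝ) < B := by positivity
  -- difference measures
  set d : ℕ → SignedMeasure ℝ := fun j => μ j - μinf with hddef
  have dsupp : ∀ j, (d j).totalVariation (Set.Ioc 0 B)ᶜ = 0 := fun j =>
    Stmt13Aux.totalVariation_compl_sub measurableSet_Ioc (hμsupp j) hμinfsupp
  have dvals : ∀ j, ∀ a b : ℝ, 0 ≤ a → a ≤ b → b ≤ B →
      d j (Set.Ioc a b) = (v j b - vinf b) - (v j a - vinf a) := by
    intro j a b h1 h2 h3
    rw [hddef]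
    simp only []
    rw [MeasureTheory.VectorMeasure.sub_apply, hμ j a b h1 h2 h3, hμinf a b h1 h2 h3]
    ring
  -- integrability of the relevant functions against the various Jordan parts
  have iu1 : ∀ j, Integrable (u j) (μ j).toJordanDecomposition.posPart := fun j =>
    Stmt13Aux.integrable_part (Stmt13Aux.part_null (hμsupp j)).1 (hu j)
  have iu2 : ∀ j, Integrable (u j) (μ j).toJordanDecomposition.negPart := fun j =>
    Stmt13Aux.integrable_part (Stmt13Aux.part_null (hμsupp j)).2 (hu j)
  have i1 : ∀ j, Integrable uinf (μ j).toJordanDecomposition.posPart := fun j =>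
    Stmt13Aux.integrable_part (Stmt13Aux.part_null (hμsupp j)).1 huinf
  have i2 : ∀ j, Integrable uinf (μ j).toJordanDecomposition.negPart := fun j =>
    Stmt13Aux.integrable_part (Stmt13Aux.part_null (hμsupp j)).2 huinf
  have i3 : Integrable uinf μinf.toJordanDecomposition.posPart :=
    Stmt13Aux.integrable_part (Stmt13Aux.part_null hμinfsupp).1 huinf
  have i4 : Integrable uinf μinf.toJordanDecomposition.negPart :=
    Stmt13Aux.integrable_part (Stmt13Aux.part_null hμinfsupp).2 huinf
  have i5 : ∀ j, Integrable uinf (d j).toJordanDecomposition.posPart := fun j =>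
    Stmt13Aux.integrable_part (Stmt13Aux.part_null (dsupp j)).1 huinf
  have i6 : ∀ j, Integrable uinf (d j).toJordanDecomposition.negPart := fun j =>
    Stmt13Aux.integrable_part (Stmt13Aux.part_null (dsupp j)).2 huinf
  -- decomposition of the difference
  have hdecomp : ∀ j, sInt (μ j) (u j) - sInt μinf uinf
      = sInt (μ j) (fun x => u j x - uinf x) + sInt (d j) uinf := by
    intro j
    have hA := Stmt13Aux.sInt_fun_sub (μ j) (iu1 j) (iu2 j) (i1 j) (i2 j)
    have hB' := Stmt13Aux.sInt_sub_meas (μ j) μinf (i1 j) (i2 j) i3 i4 (i5 j) (i6 j)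
    rw [hA, hB']
    ring
  -- uniform bound for uinf
  obtain ⟨Cg, hCg⟩ := isCompact_Icc.exists_bound_of_continuousOn huinf
  have hCg0 : 0 ≤ Cg := le_trans (norm_nonneg _) (hCg 0 ⟨le_refl 0, hB.le⟩)
  -- convergence of the real-valued variations
  have hfr : Tendsto (fun j => (eVariationOn (fun t => u j t - uinf t)
      (Set.Icc 0 B)).toReal) atTop (𝓝 0) := by
    have := (ENNReal.tendsto_toReal (a := 0) (by simp)).comp huVar
    simpa [Function.comp_def] using this
  have her : Tendsto (fun j => (eVariationOn (fun t => v j t - vinf t)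
      (Set.Icc 0 B)).toReal) atTop (𝓝 0) := by
    have := (ENNReal.tendsto_toReal (a := 0) (by simp)).comp hvVar
    simpa [Function.comp_def] using this
  set Vc : ℝ := (eVariationOn vinf (Set.Icc 0 B)).toReal with hVcdef
  -- the dominating sequence
  set g : ℕ → ℝ := fun j =>
    ((∫ t in Set.Icc 0 B, |u j t - uinf t|) / B
        + (eVariationOn (fun t => u j t - uinf t) (Set.Icc 0 B)).toReal)
      * (3 * (Vc + (eVariationOn (fun t => v j t - vinf t) (Set.Icc 0 B)).toReal))
      + Cg * (3 * (eVariationOn (fun t => v j t - vinf t) (Set.Icc 0 B)).toReal)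
    with hgdef
  have hg0 : Tendsto g atTop (𝓝 0) := by
    have h1 : Tendsto (fun j => ((∫ t in Set.Icc 0 B, |u j t - uinf t|) / B
        + (eVariationOn (fun t => u j t - uinf t) (Set.Icc 0 B)).toReal)
        * (3 * (Vc + (eVariationOn (fun t => v j t - vinf t) (Set.Icc 0 B)).toReal)))
        atTop (𝓝 ((0 / B + 0) * (3 * (Vc + 0)))) :=
      ((huL1.div_const B).add hfr).mul ((tendsto_const_nhds.add her).const_mul 3)
    have h2 : Tendsto (fun j => Cg * (3 * (eVariationOn (fun t => v j t - vinf t)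
        (Set.Icc 0 B)).toReal)) atTop (𝓝 (Cg * (3 * 0))) :=
      (her.const_mul 3).const_mul Cg
    have := h1.add h2
    have heq : (0 / B + 0) * (3 * (Vc + 0)) + Cg * (3 * 0) = 0 := by ring
    rw [heq] at this
    exact this
  -- eventual bound
  have hbound : ∀ᶠ j in atTop, |sInt (μ j) (u j) - sInt μinf uinf| ≤ g j := by
    have hev1 : ∀ᶠ j in atTop, eVariationOn (fun t => u j t - uinf t) (Set.Icc 0 B) < ⊤ :=
      huVar.eventually_lt_const (by simp)
    have hev2 : ∀ᶠ j in atTop, eVariationOn (fun t => v j t - vinf t) (Set.Icc 0 B) < ⊤ :=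
      hvVar.eventually_lt_const (by simp)
    filter_upwards [hev1, hev2] with j hfj hej
    set Cu : ℝ := (∫ t in Set.Icc 0 B, |u j t - uinf t|) / B
        + (eVariationOn (fun t => u j t - uinf t) (Set.Icc 0 B)).toReal with hCudef
    have hCu0 : 0 ≤ Cu := by
      apply add_nonneg _ ENNReal.toReal_nonneg
      apply div_nonneg _ hB.le
      exact MeasureTheory.setIntegral_nonneg measurableSet_Icc (fun x _ => abs_nonneg _)
    have hCu : ∀ x ∈ Set.Ioc 0 B, |u j x - uinf x| ≤ Cu := fun x hx =>
      Stmt13Aux.abs_le_of_L1_var hB ((hu j).sub huinf) hfj.ne (Set.Ioc_subset_Icc_self hx)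
    have A1 := Stmt13Aux.sInt_abs_le (hμsupp j) hCu
    have A2 := Stmt13Aux.totalVar_bound hB (hv j) (hvBV j).ne (hμsupp j) (hμ j)
    have A3 : (eVariationOn (v j) (Set.Icc 0 B)).toReal ≤ Vc
        + (eVariationOn (fun t => v j t - vinf t) (Set.Icc 0 B)).toReal := by
      have hsum := Stmt13Aux.evar_add_le (fun t => v j t - vinf t) vinf (Set.Icc 0 B)
      have hfun : (fun x => (v j x - vinf x) + vinf x) = v j := by funext x; ring
      rw [hfun] at hsum
      have hne : eVariationOn (fun t => v j t - vinf t) (Set.Icc 0 B)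
          + eVariationOn vinf (Set.Icc 0 B) ≠ ⊤ :=
        ENNReal.add_ne_top.2 ⟨hej.ne, hvinfBV.ne⟩
      have := ENNReal.toReal_mono hne hsum
      rwa [ENNReal.toReal_add hej.ne hvinfBV.ne, add_comm] at this
    have B1 := Stmt13Aux.sInt_abs_le (dsupp j)
      (fun x hx => by simpa using hCg x (Set.Ioc_subset_Icc_self hx))
    have B2 := Stmt13Aux.totalVar_bound hB ((hv j).sub hvinf) hej.ne (dsupp j) (dvals j)
    have hparts1 : 0 ≤ ((μ j).toJordanDecomposition.posPart Set.univ).toReal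
        + ((μ j).toJordanDecomposition.negPart Set.univ).toReal :=
      add_nonneg ENNReal.toReal_nonneg ENNReal.toReal_nonneg
    have step1 : |sInt (μ j) (fun x => u j x - uinf x)|
        ≤ Cu * (3 * (Vc + (eVariationOn (fun t => v j t - vinf t) (Set.Icc 0 B)).toReal)) := by
      refine le_trans A1 ?_
      apply mul_le_mul_of_nonneg_left _ hCu0
      nlinarith [A2, A3]
    have step2 : |sInt (d j) uinf|
        ≤ Cg * (3 * (eVariationOn (fun t => v j t - vinf t) (Set.Icc 0 B)).toReal) := by
      refine le_trans B1 ?_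
      exact mul_le_mul_of_nonneg_left B2 hCg0
    calc |sInt (μ j) (u j) - sInt μinf uinf|
        = |sInt (μ j) (fun x => u j x - uinf x) + sInt (d j) uinf| := by rw [hdecomp j]
      _ ≤ |sInt (μ j) (fun x => u j x - uinf x)| + |sInt (d j) uinf| := abs_add_le _ _
      _ ≤ g j := by rw [hgdef]; exact add_le_add step1 step2
  -- squeeze
  have habs : Tendsto (fun j => |sInt (μ j) (u j) - sInt μinf uinf|) atTop (𝓝 0) :=
    squeeze_zero' (Eventually.of_forall (fun j => abs_nonneg _)) hbound hg0
  have hzero : Tendsto (fun j => sInt (μ j) (u j) - sInt μinf uinf) atTop (𝓝 0) :=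
    (tendsto_zero_iff_abs_tendsto_zero _).2 habs
  have := hzero.add_const (sInt μinf uinf)
  simpa using this
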